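/- arXiv:2511.10813 — 6 statements merged into one kernel-verified Lean document; each statement's English description precedes it below -/
import Mathlib

section
/- (Tomato Cage Theorem) Let M be an m×1 integer matrix (a single column vector) such that M ≠ e_i and M ≠ −e_i for every standard basis vector e_i of ℤ^m. Then the chromatic number of the standardized abelian Cayley graph of M equals 2 if the sum s of the entries of M is even, and equals 3 if s is odd. -/
/-- The subgroup of `ι → ℤ` generated by the columns of `M`. -/
def colSubgroup {ι κ : Type*} (M : Matrix ι κ ℤ) : AddSubgroup (ι → ℤ) :=
  AddSubgroup.closure (Set.range fun j => fun i => M i j)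

/-- The standardized abelian Cayley graph of an integer matrix `M`. -/
def SACG {ι κ : Type*} [DecidableEq ι] (M : Matrix ι κ ℤ) :
    SimpleGraph ((ι → ℤ) ⧸ colSubgroup M) where
  Adj x y := x ≠ y ∧ ∃ i : ι,
    x - y = QuotientAddGroup.mk (Pi.single i 1) ∨
    x - y = -QuotientAddGroup.mk (Pi.single i 1)
  symm := ⟨by
    rintro x y ⟨hne, i, h | h⟩
    · exact ⟨hne.symm, i, Or.inr (by rw [← neg_sub, h])⟩
    · exact ⟨hne.symm, i, Or.inl (by rw [← neg_sub, h, neg_neg])⟩⟩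
  loopless := ⟨fun x h => h.1 rfl⟩

/-- The SACG of `M` has no loops: no standard basis vector lies in the
column subgroup. -/
def NoLoops {ι κ : Type*} [DecidableEq ι] (M : Matrix ι κ ℤ) : Prop :=
  ∀ i : ι, (Pi.single i 1 : ι → ℤ) ∉ colSubgroup M

lemma tc_mem {m : ℕ} (M : Matrix (Fin m) (Fin 1) ℤ) (x : Fin m → ℤ) :
    x ∈ colSubgroup M ↔ ∃ k : ℤ, k • (fun i => M i 0) = x := by
  have hr : (Set.range fun j : Fin 1 => fun i => M i j) = {fun i => M i 0} := by
    ext y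
    simp only [Set.mem_range, Set.mem_singleton_iff]
    constructor
    · rintro ⟨j, rfl⟩
      rw [Subsingleton.elim j 0]
    · rintro rfl; exact ⟨0, rfl⟩
  rw [colSubgroup, hr, AddSubgroup.mem_closure_singleton]

lemma tc_noloop {m : ℕ} (M : Matrix (Fin m) (Fin 1) ℤ)
    (hM : ∀ i : Fin m, (fun k => M k 0) ≠ (Pi.single i 1 : Fin m → ℤ) ∧
      (fun k => M k 0) ≠ -(Pi.single i 1 : Fin m → ℤ)) :
    ∀ i : Fin m, (Pi.single i 1 : Fin m → ℤ) ∉ colSubgroup M := by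
  intro i h
  rw [tc_mem] at h
  obtain ⟨k, hk⟩ := h
  have h1 : k * M i 0 = 1 := by
    have := congrFun hk i
    simpa using this
  rcases Int.mul_eq_one_iff_eq_one_or_neg_one.mp h1 with ⟨hk1, _⟩ | ⟨hk1, _⟩
  · subst hk1
    rw [one_smul] at hk
    exact (hM i).1 hk
  · subst hk1
    rw [neg_smul, one_smul, neg_eq_iff_eq_neg] at hk
    exact (hM i).2 hk

lemma tc_colmem {m : ℕ} (M : Matrix (Fin m) (Fin 1) ℤ) :
    (fun i => M i 0) ∈ colSubgroup M := (tc_mem M _).mpr ⟨1, one_smul _ _⟩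

/-- A homomorphism from the ambient group to `A` obtained from weights. -/
def tcHom {m : ℕ} {A : Type*} [AddCommGroup A] (w : Fin m → A) : (Fin m → ℤ) →+ A where
  toFun := fun x => ∑ i, (x i) • w i
  map_zero' := by simp
  map_add' := by
    intro a b
    show ∑ i, (a + b) i • w i = _
    rw [← Finset.sum_add_distrib]
    exact Finset.sum_congr rfl fun i _ => by rw [Pi.add_apply, add_zsmul]

lemma tcHom_single {m : ℕ} {A : Type*} [AddCommGroup A] (w : Fin m → A) (i : Fin m) :
    tcHom w (Pi.single i 1) = w i := by
  simp only [tcHom, AddMonoidHom.coe_mk, ZeroHom.coe_mk]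
  rw [Finset.sum_eq_single i]
  · simp
  · intro j _ hj; simp [Pi.single_apply, hj]
  · intro h; exact absurd (Finset.mem_univ i) h

/-- Lift of `tcHom w` to the quotient, assuming it kills the column. -/
def tcLift {m : ℕ} (M : Matrix (Fin m) (Fin 1) ℤ) {A : Type*} [AddCommGroup A]
    (w : Fin m → A) (hw : ∑ i, (M i 0) • w i = 0) :
    ((Fin m → ℤ) ⧸ colSubgroup M) →+ A :=
  QuotientAddGroup.lift _ (tcHom w) (by
    intro z hz
    obtain ⟨k, hk⟩ := (tc_mem M z).mp hz
    rw [AddMonoidHom.mem_ker, ← hk, map_zsmul,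
      show tcHom w (fun i => M i 0) = 0 from hw, smul_zero])

lemma tcLift_adj {m : ℕ} (M : Matrix (Fin m) (Fin 1) ℤ) {A : Type*} [AddCommGroup A]
    (w : Fin m → A) (hw : ∑ i, (M i 0) • w i = 0)
    {x y : (Fin m → ℤ) ⧸ colSubgroup M} (h : (SACG M).Adj x y) :
    ∃ i, tcLift M w hw x - tcLift M w hw y = w i ∨
         tcLift M w hw x - tcLift M w hw y = - w i := by
  obtain ⟨-, i, hd | hd⟩ := (show _ ∧ _ from h)
  · refine ⟨i, Or.inl ?_⟩
    rw [← map_sub, hd]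
    exact tcHom_single w i
  · refine ⟨i, Or.inr ?_⟩
    rw [← map_sub, hd, map_neg]
    exact congrArg Neg.neg (tcHom_single w i)

lemma tc_colorable_two {m : ℕ} (M : Matrix (Fin m) (Fin 1) ℤ)
    (heven : Even (∑ i, M i 0)) : (SACG M).Colorable 2 := by
  have hw : ∑ i, (M i 0) • ((1 : ZMod 2)) = 0 := by
    obtain ⟨c, hc⟩ := heven
    have : ∑ i, (M i 0) • ((1 : ZMod 2)) = ((∑ i, M i 0 : ℤ) : ZMod 2) := by
      push_cast
      exact Finset.sum_congr rfl fun i _ => by rw [zsmul_eq_mul, mul_one]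
    rw [this, hc]
    push_cast
    rw [show ((c : ZMod 2) + (c : ZMod 2)) = 2 * (c : ZMod 2) by ring]
    simp [show (2 : ZMod 2) = 0 from rfl]
  have C : (SACG M).Coloring (ZMod 2) := by
    refine SimpleGraph.Coloring.mk (fun x => tcLift M (fun _ => (1 : ZMod 2)) hw x) ?_
    intro x y h hxy
    have hxy' : tcLift M (fun _ => (1 : ZMod 2)) hw x
        = tcLift M (fun _ => (1 : ZMod 2)) hw y := hxy
    obtain ⟨i, hi | hi⟩ := tcLift_adj M _ hw h
    · rw [hxy', sub_self] at hi
      exact absurd hi.symm (by decide)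
    · rw [hxy', sub_self] at hi
      exact absurd hi.symm (by decide)
  have := C.colorable
  simpa using this

lemma tc_not_two {m : ℕ} (M : Matrix (Fin m) (Fin 1) ℤ)
    (hM : ∀ i : Fin m, (fun k => M k 0) ≠ (Pi.single i 1 : Fin m → ℤ) ∧
      (fun k => M k 0) ≠ -(Pi.single i 1 : Fin m → ℤ))
    (hodd : ¬ Even (∑ i, M i 0)) : ¬ (SACG M).Colorable 2 := by
  rintro ⟨C⟩
  set G := (Fin m → ℤ) ⧸ colSubgroup M with hG
  let g : Fin m → G := fun i => QuotientAddGroup.mk (Pi.single i 1)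
  let f : G → ZMod 2 := fun x => ((C x).val : ZMod 2)
  have hflip : ∀ (x : G) (i : Fin m), f (x + g i) = f x + 1 := by
    intro x i
    have hne : g i ≠ 0 := fun h0 =>
      tc_noloop M hM i ((QuotientAddGroup.eq_zero_iff _).mp h0)
    have hadj : (SACG M).Adj (x + g i) x :=
      show _ ∧ _ from ⟨fun h => hne (add_eq_left.mp h), i,
        Or.inl (add_sub_cancel_left x _)⟩
    have hv := C.valid hadj
    revert hv
    show C (x + g i) ≠ C x → ((C (x + g i)).val : ZMod 2) = ((C x).val : ZMod 2) + 1
    generalize C (x + g i) = a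
    generalize C x = b
    revert a b; decide
  have hflip' : ∀ (x : G) (i : Fin m), f (x - g i) = f x + 1 := by
    intro x i
    have h := hflip (x - g i) i
    rw [sub_add_cancel] at h
    rw [h, add_assoc, show (1 : ZMod 2) + 1 = 0 by decide, add_zero]
  have hzsmul : ∀ (k : ℤ) (x : G) (i : Fin m), f (x + k • g i) = f x + (k : ZMod 2) := by
    intro k
    induction k using Int.induction_on with
    | zero => simp
    | succ n ih =>
      intro x i
      have h : x + ((n : ℤ) + 1) • g i = (x + (n : ℤ) • g i) + g i := by
        rw [add_zsmul, one_zsmul, add_assoc]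
      rw [h, hflip, ih]
      push_cast; ring
    | pred n ih =>
      intro x i
      have h : x + (-(n : ℤ) - 1) • g i = (x + (-(n : ℤ)) • g i) - g i := by
        rw [sub_zsmul, one_zsmul]; abel
      rw [h, hflip', ih]
      have h3 : ((-(n : ℤ) - 1 : ℤ) : ZMod 2) = ((-(n : ℤ) : ℤ) : ZMod 2) + 1 := by
        push_cast
        rw [sub_eq_add_neg, show (-1 : ZMod 2) = 1 from by decide]
      rw [h3]; ring
  have key : ∀ (y : Fin m → ℤ) (s : Finset (Fin m)) (x : G),
      f (x + ∑ i ∈ s, (y i) • g i) = f x + ∑ i ∈ s, ((y i : ZMod 2)) := by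
    intro y s
    induction s using Finset.induction_on with
    | empty => simp
    | @insert a s hns ih =>
      intro x
      rw [Finset.sum_insert hns, Finset.sum_insert hns, ← add_assoc, ih, hzsmul]
      ring
  have hy : ∀ y : Fin m → ℤ, (QuotientAddGroup.mk y : G) = ∑ i, (y i) • g i := by
    intro y
    conv_lhs => rw [← Finset.univ_sum_single y]
    rw [show (QuotientAddGroup.mk : (Fin m → ℤ) → G) = (QuotientAddGroup.mk' (colSubgroup M)) from rfl,
      map_sum]
    refine Finset.sum_congr rfl fun i _ => ?_
    have : (Pi.single i (y i) : Fin m → ℤ) = y i • Pi.single i 1 := by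
      funext j
      by_cases h : j = i <;> simp [h, Pi.single_apply]
    rw [this, map_zsmul]
    rfl
  have hv : (QuotientAddGroup.mk (fun i => M i 0) : G) = 0 :=
    (QuotientAddGroup.eq_zero_iff _).mpr (tc_colmem M)
  have h0 := key (fun i => M i 0) Finset.univ 0
  rw [← hy, hv, add_zero] at h0
  have hs0 : (∑ i, ((M i 0 : ZMod 2))) = 0 := (left_eq_add.mp h0)
  have hs1 : ((∑ i, M i 0 : ℤ) : ZMod 2) = 0 := by push_cast; exact hs0
  rw [ZMod.intCast_zmod_eq_zero_iff_dvd] at hs1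
  obtain ⟨c, hc⟩ := hs1
  exact hodd ⟨c, by omega⟩

lemma tc_cyc (n : ℕ) (h3 : 3 ≤ n) (hodd : n % 2 = 1) (a : ZMod n) :
    haveI : NeZero n := ⟨by omega⟩
    (if a.val = n - 1 then (2 : Fin 3) else if a.val % 2 = 0 then 0 else 1) ≠
    (if (a + 1).val = n - 1 then (2 : Fin 3) else if (a + 1).val % 2 = 0 then 0 else 1) := by
  haveI : NeZero n := ⟨by omega⟩
  haveI : Fact (1 < n) := ⟨by omega⟩
  have hval : (a + 1).val = (a.val + 1) % n := by rw [ZMod.val_add, ZMod.val_one]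
  have hklt : a.val < n := ZMod.val_lt a
  rw [hval]
  rcases eq_or_ne a.val (n - 1) with h | h
  · have h0 : (a.val + 1) % n = 0 := by
      have hh : a.val + 1 = n := by omega
      rw [hh, Nat.mod_self]
    rw [h0, if_pos h, if_neg (by omega), if_pos (by omega)]
    decide
  · have h1 : (a.val + 1) % n = a.val + 1 := Nat.mod_eq_of_lt (by omega)
    rw [h1, if_neg h]
    rcases eq_or_ne (a.val + 1) (n - 1) with h2 | h2
    · rw [if_pos h2, if_neg (by omega)]
      decide
    · rw [if_neg h2]
      by_cases hp : a.val % 2 = 0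
      · rw [if_pos hp, if_neg (by omega)]
        decide
      · rw [if_neg hp, if_pos (by omega)]
        decide

lemma tc_colorable_three {m : ℕ} (M : Matrix (Fin m) (Fin 1) ℤ)
    (hM : ∀ i : Fin m, (fun k => M k 0) ≠ (Pi.single i 1 : Fin m → ℤ) ∧
      (fun k => M k 0) ≠ -(Pi.single i 1 : Fin m → ℤ))
    (hodd : ¬ Even (∑ i, M i 0)) : (SACG M).Colorable 3 := by
  set n : ℕ := ∑ i, (M i 0).natAbs with hn
  -- parity of n
  have hterm : ∀ i : Fin m, Even ((((M i 0).natAbs : ℤ)) - M i 0) := by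
    intro i
    rcases le_or_gt 0 (M i 0) with hp | hp
    · exact ⟨0, by omega⟩
    · exact ⟨-(M i 0), by omega⟩
  have hsub : Even ((n : ℤ) - ∑ i, M i 0) := by
    have : ((n : ℤ) - ∑ i, M i 0) = ∑ i, ((((M i 0).natAbs : ℤ)) - M i 0) := by
      rw [Finset.sum_sub_distrib, hn]
      push_cast
      ring
    rw [this]
    exact Finset.sum_induction _ Even (fun a b ha hb => ha.add hb) Even.zero
      (fun i _ => hterm i)
  have hnodd' : ¬ Even n := by
    intro he
    exact hodd ((Int.even_sub.mp hsub).mp ((Int.even_coe_nat n).mpr he))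
  have hnodd : n % 2 = 1 := Nat.odd_iff.mp (Nat.not_even_iff_odd.mp hnodd')
  have hn1 : n ≠ 1 := by
    intro h1
    obtain ⟨i, hi0⟩ : ∃ i, (M i 0).natAbs ≠ 0 := by
      by_contra hc
      push_neg at hc
      have h0 : n = 0 := by rw [hn]; exact Finset.sum_eq_zero fun i _ => hc i
      omega
    have hle : (M i 0).natAbs ≤ n :=
      hn ▸ Finset.single_le_sum (f := fun i => (M i 0).natAbs)
        (fun j _ => Nat.zero_le _) (Finset.mem_univ i)
    have hi1 : (M i 0).natAbs = 1 := by omega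
    have hrest : ∀ j, j ≠ i → M j 0 = 0 := by
      intro j hj
      have hsum : (M i 0).natAbs + ∑ k ∈ Finset.univ.erase i, (M k 0).natAbs = n := by
        rw [hn]
        simpa using Finset.add_sum_erase Finset.univ
          (fun i => (M i 0).natAbs) (Finset.mem_univ i)
      have hz : ∑ k ∈ Finset.univ.erase i, (M k 0).natAbs = 0 := by omega
      have := (Finset.sum_eq_zero_iff).mp hz j
        (Finset.mem_erase.mpr ⟨hj, Finset.mem_univ j⟩)
      omega
    rcases Int.natAbs_eq_iff.mp hi1 with h | h
    · refine (hM i).1 ?_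
      funext j
      by_cases hj : j = i
      · subst hj; rw [Pi.single_eq_same]; simpa using h
      · rw [Pi.single_eq_of_ne hj]; exact hrest j hj
    · refine (hM i).2 ?_
      funext j
      by_cases hj : j = i
      · subst hj; rw [Pi.neg_apply, Pi.single_eq_same]; simpa using h
      · rw [Pi.neg_apply, Pi.single_eq_of_ne hj, neg_zero]; exact hrest j hj
  have h3 : 3 ≤ n := by omega
  haveI : NeZero n := ⟨by omega⟩
  set w : Fin m → ZMod n := fun i => if 0 ≤ M i 0 then 1 else -1 with hwdef
  have hwi : ∀ i, (M i 0) • w i = (((M i 0).natAbs : ℕ) : ZMod n) := by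
    intro i
    by_cases hp : 0 ≤ M i 0
    · simp only [hwdef, if_pos hp, zsmul_one]
      have h1 : ((M i 0).natAbs : ℤ) = M i 0 := by omega
      calc ((M i 0 : ℤ) : ZMod n) = (((M i 0).natAbs : ℤ) : ZMod n) := by rw [h1]
        _ = (((M i 0).natAbs : ℕ) : ZMod n) := Int.cast_natCast _
    · simp only [hwdef, if_neg hp, smul_neg, zsmul_one]
      have h1 : ((M i 0).natAbs : ℤ) = -(M i 0) := by omega
      calc -((M i 0 : ℤ) : ZMod n) = (((-(M i 0)) : ℤ) : ZMod n) := by push_cast; ring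
        _ = (((M i 0).natAbs : ℤ) : ZMod n) := by rw [h1]
        _ = (((M i 0).natAbs : ℕ) : ZMod n) := Int.cast_natCast _
  have hw : ∑ i, (M i 0) • w i = 0 := by
    rw [Finset.sum_congr rfl fun i _ => hwi i, ← Nat.cast_sum, ← hn, ZMod.natCast_self]
  have C : (SACG M).Coloring (Fin 3) := by
    refine SimpleGraph.Coloring.mk
      (fun x => if (tcLift M w hw x).val = n - 1 then (2 : Fin 3)
        else if (tcLift M w hw x).val % 2 = 0 then 0 else 1) ?_
    intro x y h hxy
    have hxy' : (if (tcLift M w hw x).val = n - 1 then (2 : Fin 3)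
        else if (tcLift M w hw x).val % 2 = 0 then 0 else 1) =
        (if (tcLift M w hw y).val = n - 1 then (2 : Fin 3)
        else if (tcLift M w hw y).val % 2 = 0 then 0 else 1) := hxy
    obtain ⟨i, hi | hi⟩ := tcLift_adj M w hw h <;>
    · have hwi2 : w i = 1 ∨ w i = -1 := by
        rw [hwdef]
        by_cases hp : 0 ≤ M i 0
        · exact Or.inl (by simp [hp])
        · exact Or.inr (by simp [hp])
      have hd : tcLift M w hw x - tcLift M w hw y = 1 ∨
          tcLift M w hw x - tcLift M w hw y = -1 := by
        rcases hwi2 with h1 | h1 <;> rw [h1] at hi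
        · first | exact Or.inl hi | exact Or.inr hi
        · first
          | exact Or.inr hi
          | exact Or.inl (by rw [hi]; ring)
      rcases hd with hd | hd
      · have hcx : tcLift M w hw x = tcLift M w hw y + 1 := by linear_combination hd
        rw [hcx] at hxy'
        exact tc_cyc n h3 hnodd (tcLift M w hw y) hxy'.symm
      · have hcy : tcLift M w hw y = tcLift M w hw x + 1 := by linear_combination -hd
        rw [hcy] at hxy'
        exact tc_cyc n h3 hnodd (tcLift M w hw x) hxy'
  have := C.colorable
  simpa using this

theorem tomato_cage_theorem (m : ℕ) (hm : 0 < m) (M : Matrix (Fin m) (Fin 1) ℤ)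
    (hM : ∀ i : Fin m, (fun k => M k 0) ≠ (Pi.single i 1 : Fin m → ℤ) ∧
      (fun k => M k 0) ≠ -(Pi.single i 1 : Fin m → ℤ)) :
    (Even (∑ i, M i 0) → (SACG M).chromaticNumber = 2) ∧
    (¬ Even (∑ i, M i 0) → (SACG M).chromaticNumber = 3) := by
  have hnc1 : ¬ (SACG M).Colorable 1 := by
    rintro ⟨C⟩
    set i0 : Fin m := ⟨0, hm⟩
    have hne : (QuotientAddGroup.mk (Pi.single i0 1) : (Fin m → ℤ) ⧸ colSubgroup M) ≠ 0 :=
      fun h0 => tc_noloop M hM i0 ((QuotientAddGroup.eq_zero_iff _).mp h0)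
    have hadj : (SACG M).Adj (QuotientAddGroup.mk (Pi.single i0 1)) 0 :=
      show _ ∧ _ from ⟨hne, i0, Or.inl (sub_zero _)⟩
    exact C.valid hadj (Subsingleton.elim _ _)
  have heq : ∀ (k : ℕ), (SACG M).Colorable (k + 1) → ¬ (SACG M).Colorable k →
      (SACG M).chromaticNumber = ((k + 1 : ℕ) : ℕ∞) := by
    intro k h1 h2
    refine le_antisymm h1.chromaticNumber_le ?_
    have hlt : (k : ℕ∞) < (SACG M).chromaticNumber := by
      by_contra hle
      exact h2 (SimpleGraph.chromaticNumber_le_iff_colorable.mp (not_lt.mp hle))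
    have hfin : (k : ℕ∞) ≠ ⊤ := ENat.coe_ne_top k
    have := (ENat.add_one_le_iff hfin).mpr hlt
    exact_mod_cast this
  constructor
  · intro heven
    have := heq 1 (tc_colorable_two M heven) hnc1
    exact_mod_cast this
  · intro hoddE
    have := heq 2 (tc_colorable_three M hM hoddE) (tc_not_two M hM hoddE)
    exact_mod_cast this
end

section
/- Let M be an m×r integer matrix, let P be an m×m signed permutation matrix, and let U be an r×r integer matrix with determinant 1 or −1. Then the standardized abelian Cayley graph of P·M·U is isomorphic (as a simple graph) to the standardized abelian Cayley graph of M. -/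
/-- A signed permutation matrix: each row and each column has exactly one
nonzero entry, and every entry is `0`, `1`, or `-1`. -/
def IsSignedPermMatrix {n : ℕ} (P : Matrix (Fin n) (Fin n) ℤ) : Prop :=
  (∀ i, ∃! j, P i j ≠ 0) ∧ (∀ j, ∃! i, P i j ≠ 0) ∧
  ∀ i j, P i j = 0 ∨ P i j = 1 ∨ P i j = -1

lemma mem_colSubgroup_iff {ι κ : Type*} [Fintype κ] [DecidableEq κ] (A : Matrix ι κ ℤ)
    (x : ι → ℤ) : x ∈ colSubgroup A ↔ ∃ v, A.mulVec v = x := by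
  constructor
  · intro hx
    refine AddSubgroup.closure_induction ?_ ⟨0, Matrix.mulVec_zero A⟩ ?_ ?_ hx
    · rintro _ ⟨j, rfl⟩
      exact ⟨Pi.single j 1, by simp; rfl⟩
    · rintro a b _ _ ⟨v, rfl⟩ ⟨w, rfl⟩
      exact ⟨v + w, Matrix.mulVec_add A v w⟩
    · rintro a _ ⟨v, rfl⟩
      exact ⟨-v, Matrix.mulVec_neg v A⟩
  · rintro ⟨v, rfl⟩
    have hv : v = ∑ j : κ, Pi.single j (v j) := (Finset.univ_sum_single v).symm
    have hs : A.mulVec (∑ j : κ, Pi.single j (v j)) = ∑ j : κ, A.mulVec (Pi.single j (v j)) := by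
      simpa only [Matrix.mulVecLin_apply] using map_sum A.mulVecLin (fun j => Pi.single j (v j)) Finset.univ
    rw [hv, hs]
    refine sum_mem fun j _ => ?_
    have h1 : A.mulVec (Pi.single j (v j)) = v j • fun i => A i j := by
      funext i; simp [mul_comm]
    rw [h1]
    exact zsmul_mem (AddSubgroup.subset_closure (Set.mem_range_self j)) _

open Matrix in
lemma transpose_isSignedPermAux' {n : ℕ} {P : Matrix (Fin n) (Fin n) ℤ}
    (hP : IsSignedPermMatrix P) : IsSignedPermMatrix Pᵀ :=
  ⟨hP.2.1, hP.1, fun i j => hP.2.2 j i⟩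

open Matrix in
lemma sp_transpose_mul {n : ℕ} {P : Matrix (Fin n) (Fin n) ℤ}
    (hP : IsSignedPermMatrix P) : Pᵀ * P = 1 := by
  ext j k
  rw [Matrix.mul_apply]
  by_cases hjk : j = k
  · subst hjk
    obtain ⟨i0, hi0, hu⟩ := hP.2.1 j
    rw [Finset.sum_eq_single i0]
    · rcases hP.2.2 i0 j with h | h | h
      · exact absurd h hi0
      · simp [Matrix.transpose_apply, h, Matrix.one_apply]
      · simp [Matrix.transpose_apply, h, Matrix.one_apply]
    · intro i _ hi
      have : P i j = 0 := by
        by_contra h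
        exact hi (hu i h)
      simp [Matrix.transpose_apply, this]
    · intro h; exact absurd (Finset.mem_univ i0) h
  · rw [Matrix.one_apply_ne hjk]
    refine Finset.sum_eq_zero fun i _ => ?_
    by_cases hij : P i j = 0
    · simp [Matrix.transpose_apply, hij]
    · have hik : P i k = 0 := by
        by_contra h
        obtain ⟨j', _, hu⟩ := hP.1 i
        exact hjk ((hu j hij).trans (hu k h).symm)
      simp [hik]

lemma sp_mulVec_single {n : ℕ} {P : Matrix (Fin n) (Fin n) ℤ}
    (hP : IsSignedPermMatrix P) (i : Fin n) :
    ∃ j, P.mulVec (Pi.single i 1) = Pi.single j 1 ∨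
      P.mulVec (Pi.single i 1) = -Pi.single j 1 := by
  obtain ⟨j, hj, hu⟩ := hP.2.1 i
  have hcol : ∀ k, k ≠ j → P k i = 0 := fun k hk => by
    by_contra h; exact hk (hu k h)
  refine ⟨j, ?_⟩
  rcases hP.2.2 j i with h | h | h
  · exact absurd h hj
  · left
    funext k
    by_cases hk : k = j
    · subst hk; simp [h]
    · simp [hcol k hk, Pi.single_eq_of_ne hk]
  · right
    funext k
    by_cases hk : k = j
    · subst hk; simp [h]
    · simp [hcol k hk, Pi.single_eq_of_ne hk]

open Matrix in
lemma sp_mul_transpose {n : ℕ} {P : Matrix (Fin n) (Fin n) ℤ}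
    (hP : IsSignedPermMatrix P) : P * Pᵀ = 1 := by
  have h := sp_transpose_mul (transpose_isSignedPermAux' hP)
  rwa [Matrix.transpose_transpose] at h

lemma adj_transfer {ι κ κ' : Type*} [DecidableEq ι]
    (A : Matrix ι κ ℤ) (B : Matrix ι κ' ℤ)
    (ψ : ((ι → ℤ) ⧸ colSubgroup A) ≃+ ((ι → ℤ) ⧸ colSubgroup B))
    (hψ : ∀ i : ι, ∃ j : ι,
        ψ (QuotientAddGroup.mk (Pi.single i 1)) = QuotientAddGroup.mk (Pi.single j 1) ∨
        ψ (QuotientAddGroup.mk (Pi.single i 1)) = -QuotientAddGroup.mk (Pi.single j 1))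
    {x y : (ι → ℤ) ⧸ colSubgroup A} (h : (SACG A).Adj x y) : (SACG B).Adj (ψ x) (ψ y) := by
  obtain ⟨hne, i, hc⟩ := h
  obtain ⟨j, hj⟩ := hψ i
  refine ⟨fun he => hne (ψ.injective he), j, ?_⟩
  have hsub : ψ x - ψ y = ψ (x - y) := (map_sub ψ x y).symm
  rcases hc with hc | hc <;> rcases hj with hj | hj
  · exact Or.inl (by rw [hsub, hc, hj])
  · exact Or.inr (by rw [hsub, hc, hj])
  · exact Or.inr (by rw [hsub, hc, map_neg, hj])
  · exact Or.inl (by rw [hsub, hc, map_neg, hj, neg_neg])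

open Matrix in
theorem SACG_iso_of_signed_perm_mul_unimodular (m r : ℕ)
    (M : Matrix (Fin m) (Fin r) ℤ)
    (P : Matrix (Fin m) (Fin m) ℤ) (hP : IsSignedPermMatrix P)
    (U : Matrix (Fin r) (Fin r) ℤ) (hU : U.det = 1 ∨ U.det = -1) :
    Nonempty (SACG (P * M * U) ≃g SACG M) := by
  have hdU : IsUnit U.det := by rcases hU with h | h <;> simp [h]
  let f : (Fin m → ℤ) ≃+ (Fin m → ℤ) :=
    { toFun := P.mulVec
      invFun := Pᵀ.mulVec
      left_inv := fun x => by
        rw [Matrix.mulVec_mulVec, sp_transpose_mul hP, Matrix.one_mulVec]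
      right_inv := fun x => by
        rw [Matrix.mulVec_mulVec, sp_mul_transpose hP, Matrix.one_mulVec]
      map_add' := fun x y => Matrix.mulVec_add P x y }
  have hfz : ∀ z, f z = P.mulVec z := fun z => rfl
  have hfsz : ∀ z, f.symm z = Pᵀ.mulVec z := fun z => rfl
  have hmap : (colSubgroup M).map f.toAddMonoidHom = colSubgroup (P * M * U) := by
    have hMU : colSubgroup (P * M * U) = colSubgroup (P * M) := by
      ext x
      simp only [mem_colSubgroup_iff]
      constructor
      · rintro ⟨v, rfl⟩
        exact ⟨U.mulVec v, by rw [Matrix.mulVec_mulVec]⟩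
      · rintro ⟨v, rfl⟩
        refine ⟨U⁻¹.mulVec v, ?_⟩
        rw [Matrix.mulVec_mulVec, Matrix.mul_assoc (P * M) U U⁻¹,
          Matrix.mul_nonsing_inv U hdU, Matrix.mul_one]
    rw [hMU]
    ext x
    simp only [AddSubgroup.mem_map, mem_colSubgroup_iff]
    constructor
    · rintro ⟨y, ⟨v, rfl⟩, rfl⟩
      exact ⟨v, by rw [← Matrix.mulVec_mulVec]; rfl⟩
    · rintro ⟨v, rfl⟩
      exact ⟨M.mulVec v, ⟨v, rfl⟩, by
        show f (M.mulVec v) = (P * M).mulVec v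
        rw [hfz, Matrix.mulVec_mulVec]⟩
  let ψ := QuotientAddGroup.congr (colSubgroup M) (colSubgroup (P * M * U)) f hmap
  have hψmk : ∀ z, ψ (QuotientAddGroup.mk z) = QuotientAddGroup.mk (f z) := fun z => rfl
  have hψsymm : ∀ z, ψ.symm (QuotientAddGroup.mk z) = QuotientAddGroup.mk (f.symm z) := by
    intro z
    apply ψ.injective
    rw [AddEquiv.apply_symm_apply, hψmk, AddEquiv.apply_symm_apply]
  have key1 : ∀ i : Fin m, ∃ j : Fin m,
      ψ (QuotientAddGroup.mk (Pi.single i 1)) = QuotientAddGroup.mk (Pi.single j 1) ∨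
      ψ (QuotientAddGroup.mk (Pi.single i 1)) = -QuotientAddGroup.mk (Pi.single j 1) := by
    intro i
    obtain ⟨j, hj | hj⟩ := sp_mulVec_single hP i
    · exact ⟨j, Or.inl (by rw [hψmk, hfz, hj])⟩
    · exact ⟨j, Or.inr (by rw [hψmk, hfz, hj, ← QuotientAddGroup.mk_neg])⟩
  have key2 : ∀ i : Fin m, ∃ j : Fin m,
      ψ.symm (QuotientAddGroup.mk (Pi.single i 1)) = QuotientAddGroup.mk (Pi.single j 1) ∨
      ψ.symm (QuotientAddGroup.mk (Pi.single i 1)) = -QuotientAddGroup.mk (Pi.single j 1) := by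
    intro i
    obtain ⟨j, hj | hj⟩ := sp_mulVec_single (transpose_isSignedPermAux' hP) i
    · exact ⟨j, Or.inl (by rw [hψsymm, hfsz, hj])⟩
    · exact ⟨j, Or.inr (by rw [hψsymm, hfsz, hj, ← QuotientAddGroup.mk_neg])⟩
  refine ⟨⟨ψ.symm.toEquiv, ?_⟩⟩
  intro a b
  constructor
  · intro h
    have h2 := adj_transfer M (P * M * U) ψ key1 h
    simpa using h2
  · intro h
    exact adj_transfer (P * M * U) M ψ.symm key2 h
end

section
/- Let M be an m×r integer matrix with m ≥ 2, and let M' be the (m−1)×r integer matrix obtained from M by replacing two distinct rows of M with their sum (i.e., collapsing those two rows by adding them) and keeping all other rows. Suppose the standardized abelian Cayley graph of M' has no loops. Then there exists a graph homomorphism from the standardized abelian Cayley graph of M to the standardized abelian Cayley graph of M'. -/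
theorem SACG_hom_of_collapse_rows (m r : ℕ) (M : Matrix (Fin (m + 2)) (Fin r) ℤ)
    (a b : Fin (m + 2)) (hab : a ≠ b)
    (M' : Matrix {i : Fin (m + 2) // i ≠ b} (Fin r) ℤ)
    (hM' : ∀ (i : {i : Fin (m + 2) // i ≠ b}) (j : Fin r),
      M' i j = if (i : Fin (m + 2)) = a then M a j + M b j else M (i : Fin (m + 2)) j)
    (hloops : NoLoops M') :
    Nonempty (SACG M →g SACG M') := by
  classical
  let f : ((Fin (m+2)) → ℤ) →+ ({i : Fin (m+2) // i ≠ b} → ℤ) :=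
    { toFun := fun x i => if (i : Fin (m+2)) = a then x a + x b else x (i : Fin (m+2))
      map_zero' := by funext i; simp
      map_add' := by
        intro x y; funext i
        by_cases h : (i : Fin (m+2)) = a <;> simp [h] <;> ring }
  have hf : ∀ (x : (Fin (m+2)) → ℤ) (i : {i : Fin (m+2) // i ≠ b}),
      f x i = if (i : Fin (m+2)) = a then x a + x b else x (i : Fin (m+2)) := fun _ _ => rfl
  have hle : colSubgroup M ≤ (colSubgroup M').comap f := by
    rw [colSubgroup, AddSubgroup.closure_le]
    rintro _ ⟨j, rfl⟩
    rw [SetLike.mem_coe, AddSubgroup.mem_comap]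
    have heq : f (fun i => M i j) = fun i => M' i j := by
      funext i
      rw [hf, hM' i j]
    rw [heq]
    exact AddSubgroup.subset_closure ⟨j, rfl⟩
  have key : ∀ i : Fin (m+2), ∃ i' : {i : Fin (m+2) // i ≠ b},
      f (Pi.single i 1) = Pi.single i' 1 := by
    intro i
    by_cases h : i = b
    · refine ⟨⟨a, hab⟩, ?_⟩
      funext j
      subst h
      rw [hf]
      by_cases hj : (j : Fin (m+2)) = a
      · have : j = ⟨a, hab⟩ := Subtype.ext hj
        simp [this, Pi.single_apply, hab.symm]
      · have : j ≠ ⟨a, hab⟩ := fun hc => hj (congrArg Subtype.val hc)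
        simp [hj, this, Pi.single_apply, j.2]
    · refine ⟨⟨i, h⟩, ?_⟩
      funext j
      rw [hf]
      by_cases hj : (j : Fin (m+2)) = a
      · have hji : (j = (⟨i, h⟩ : {i : Fin (m+2) // i ≠ b})) ↔ a = i := by
          rw [Subtype.ext_iff]; simp [hj]
        simp [hj, Pi.single_apply, hji, Ne.symm h]
      · have hji : (j = (⟨i, h⟩ : {i : Fin (m+2) // i ≠ b})) ↔ (j : Fin (m+2)) = i := by
          rw [Subtype.ext_iff]
        simp [hj, Pi.single_apply, hji]
  let F := QuotientAddGroup.map (colSubgroup M) (colSubgroup M') f hle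
  refine ⟨⟨F, ?_⟩⟩
  rintro x y ⟨hne, i, h⟩
  obtain ⟨i', hi'⟩ := key i
  have hmk : F (QuotientAddGroup.mk (Pi.single i 1)) =
      QuotientAddGroup.mk (Pi.single i' 1) := by
    rw [QuotientAddGroup.map_mk, hi']
  have hsub : F x - F y = F (x - y) := (map_sub F x y).symm
  have hnotmem : (QuotientAddGroup.mk (Pi.single i' 1) :
      (({i : Fin (m+2) // i ≠ b} → ℤ) ⧸ colSubgroup M')) ≠ 0 := by
    intro hc
    exact hloops i' ((QuotientAddGroup.eq_zero_iff _).mp hc)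
  have hval : F x - F y = QuotientAddGroup.mk (Pi.single i' 1) ∨
      F x - F y = -QuotientAddGroup.mk (Pi.single i' 1) := by
    rcases h with h | h
    · left; rw [hsub, h, hmk]
    · right; rw [hsub, h, map_neg, hmk]
  refine ⟨?_, i', hval⟩
  intro hc
  rcases hval with hv | hv
  · exact hnotmem (by rw [← hv, hc, sub_self])
  · exact hnotmem (by rw [← neg_eq_zero, ← hv, hc, sub_self])
end

section
/- Let M be an m×r integer matrix whose standardized abelian Cayley graph X has no loops. Then X is 2-colorable if and only if every column sum of M is even (i.e., for each column of M, the sum of its entries is even). -/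
/-- Sum-of-entries mod 2 homomorphism. -/
def sumMod2 (m : ℕ) : (Fin m → ℤ) →+ ZMod 2 :=
  AddMonoidHom.mk' (fun v => ∑ i, ((v i : ZMod 2))) (by
    intro a b
    simp only [Pi.add_apply]
    push_cast
    rw [Finset.sum_add_distrib])

lemma sumMod2_single (m : ℕ) (i : Fin m) (z : ℤ) :
    sumMod2 m (Pi.single i z) = (z : ZMod 2) := by
  simp only [sumMod2, AddMonoidHom.mk'_apply]
  rw [Finset.sum_eq_single i]
  · simp
  · intro b _ hb; simp [Pi.single_apply, hb]
  · simp

theorem SACG_bipartite_iff_column_sums_even (m r : ℕ) (M : Matrix (Fin m) (Fin r) ℤ)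
    (hloops : NoLoops M) :
    (SACG M).Colorable 2 ↔ ∀ j, Even (∑ i, M i j) := by
  constructor
  · rintro ⟨C⟩ j
    set f : ((Fin m → ℤ) ⧸ colSubgroup M) → ZMod 2 := fun x => ((C x : Fin 2) : ZMod 2) with hf
    set e : Fin m → ((Fin m → ℤ) ⧸ colSubgroup M) :=
      fun i => QuotientAddGroup.mk (Pi.single i 1) with he
    have key : ∀ (x : (Fin m → ℤ) ⧸ colSubgroup M) (i : Fin m),
        f (e i + x) = f x + 1 := by
      intro x i
      have hne : (e i + x) ≠ x := by
        intro h
        apply hloops i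
        have h0 : e i = 0 := by
          have := congrArg (· - x) h
          simpa using this
        exact (QuotientAddGroup.eq_zero_iff _).mp h0
      have hadj : (SACG M).Adj (e i + x) x := show (e i + x) ≠ x ∧ _ from ⟨hne, i, Or.inl (by simp [he])⟩
      have hCne := C.valid hadj
      simp only [hf]
      revert hCne
      generalize C (e i + x) = a
      generalize C x = b
      intro hCne
      fin_cases a <;> fin_cases b <;> first | (exact absurd rfl hCne) | rfl
    have keyneg : ∀ (x : (Fin m → ℤ) ⧸ colSubgroup M) (i : Fin m),
        f (-e i + x) = f x + 1 := by
      intro x i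
      have h1 := key (-e i + x) i
      rw [show e i + (-e i + x) = x by abel] at h1
      rw [h1]
      have h2 : ∀ a : ZMod 2, a + 1 + 1 = a := by decide
      rw [h2]
    have keyz : ∀ (x : (Fin m → ℤ) ⧸ colSubgroup M) (i : Fin m) (t : ℤ),
        f (t • e i + x) = f x + (t : ZMod 2) := by
      intro x i t
      induction t using Int.induction_on with
      | zero => simp
      | succ n ih =>
          rw [show ((n : ℤ) + 1) • e i + x = e i + ((n : ℤ) • e i + x) by
            rw [add_zsmul, one_zsmul]; abel, key, ih]
          push_cast; ring
      | pred n ih =>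
          rw [show (-(n : ℤ) - 1) • e i + x = -e i + ((-(n : ℤ)) • e i + x) by
            rw [sub_zsmul, one_zsmul]; abel, keyneg, ih]
          rw [show (1 : ZMod 2) = -1 from by decide]
          push_cast; ring
    have keysum : ∀ (s : Finset (Fin m)) (v : Fin m → ℤ),
        f (QuotientAddGroup.mk (∑ i ∈ s, Pi.single i (v i))) =
          f 0 + ∑ i ∈ s, (v i : ZMod 2) := by
      intro s
      induction s using Finset.induction_on with
      | empty => intro v; simp
      | insert _ _ hnotmem ih =>
          rename_i a s'
          intro v
          rw [Finset.sum_insert hnotmem, Finset.sum_insert hnotmem]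
          have hsingle : (Pi.single a (v a) : Fin m → ℤ) = (v a) • Pi.single a 1 := by
            ext k; simp [Pi.single_apply]
          have hmk : (QuotientAddGroup.mk (Pi.single a (v a) + ∑ i ∈ s', Pi.single i (v i)) :
              (Fin m → ℤ) ⧸ colSubgroup M)
              = (v a) • e a + QuotientAddGroup.mk (∑ i ∈ s', Pi.single i (v i)) := by
            rw [hsingle]
            rw [show (QuotientAddGroup.mk ((v a) • (Pi.single a 1 : Fin m → ℤ) +
                ∑ i ∈ s', Pi.single i (v i)) : (Fin m → ℤ) ⧸ colSubgroup M)
              = QuotientAddGroup.mk ((v a) • (Pi.single a 1 : Fin m → ℤ)) +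
                QuotientAddGroup.mk (∑ i ∈ s', Pi.single i (v i)) from rfl]
            congr 1
          rw [hmk, keyz, ih]
          ring
    have hcol : (QuotientAddGroup.mk (fun i => M i j) : (Fin m → ℤ) ⧸ colSubgroup M) = 0 := by
      rw [QuotientAddGroup.eq_zero_iff]
      exact AddSubgroup.subset_closure ⟨j, rfl⟩
    have hdecomp : (fun i => M i j) = ∑ i : Fin m, Pi.single i (M i j) := by
      ext k; rw [Finset.sum_apply]
      rw [Finset.sum_eq_single k]
      · simp
      · intro b _ hb; simp [Pi.single_apply, hb]
      · simp
    have hks := keysum Finset.univ (fun i => M i j)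
    rw [← hdecomp, hcol] at hks
    have hsum0 : (∑ i : Fin m, ((M i j : ZMod 2))) = 0 := (left_eq_add.mp hks)
    have hcast : ((∑ i : Fin m, M i j : ℤ) : ZMod 2) = 0 := by push_cast; exact hsum0
    rw [ZMod.intCast_zmod_eq_zero_iff_dvd] at hcast
    exact (even_iff_two_dvd).mpr (by exact_mod_cast hcast)
  · intro hev
    have hker : colSubgroup M ≤ (sumMod2 m).ker := by
      rw [colSubgroup, AddSubgroup.closure_le]
      rintro _ ⟨j, rfl⟩
      simp only [SetLike.mem_coe, AddMonoidHom.mem_ker]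
      have : sumMod2 m (fun i => M i j) = ((∑ i, M i j : ℤ) : ZMod 2) := by
        simp only [sumMod2, AddMonoidHom.mk'_apply]; push_cast; rfl
      rw [this]
      rw [ZMod.intCast_zmod_eq_zero_iff_dvd]
      exact_mod_cast (even_iff_two_dvd).mp (hev j)
    let Cbar : ((Fin m → ℤ) ⧸ colSubgroup M) →+ ZMod 2 :=
      QuotientAddGroup.lift (colSubgroup M) (sumMod2 m) hker
    have hCbar : ∀ i : Fin m,
        Cbar (QuotientAddGroup.mk (Pi.single i 1)) = 1 := by
      intro i
      show sumMod2 m (Pi.single i 1) = 1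
      rw [sumMod2_single]; rfl
    let C : (SACG M).Coloring (ZMod 2) := SimpleGraph.Coloring.mk Cbar (by
      rintro x y ⟨hne, i, h | h⟩ hcc
      · have : Cbar (x - y) = 0 := by rw [map_sub, hcc, sub_self]
        rw [h, hCbar] at this
        exact one_ne_zero this
      · have : Cbar (x - y) = 0 := by rw [map_sub, hcc, sub_self]
        rw [h, map_neg, hCbar] at this
        rw [show (-1 : ZMod 2) = 1 from by decide] at this
        exact one_ne_zero this)
    have := C.colorable
    simpa using this
end

section
/- Let y₂₁, y₂₂, y₃₂ be integers and let M be the 3×2 integer matrix with rows (1,0), (y₂₁, y₂₂), (y₂₁, y₃₂). Suppose M has no zero rows and no zero columns, that y₂₂ ≡ y₃₂ (mod 3) with y₂₂ ≠ y₃₂, that the standardized abelian Cayley graph X of M has no loops, and that the chromatic number of X equals 4. Then |y₂₂| ∈ {1,2}, or |y₃₂| ∈ {1,2}, or |y₂₁| = 1. -/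
def Wpred (s b c : ℤ) : Prop :=
  ∃ m r1 r2 r3 : ℤ, 1 ≤ m ∧ m ≤ r1 ∧ r1 ≤ 2*m ∧ m ≤ r2 ∧ r2 ≤ 2*m ∧
    m ≤ r3 ∧ r3 ≤ 2*m ∧ (3*m ∣ r1 + s*(r2+r3)) ∧ (3*m ∣ b*r2 + c*r3)

lemma caseA {s b c : ℤ} (hs : 2 ≤ s) (hc : 3*s ≤ c) (hdvd : 3 ∣ c - b) :
    Wpred s b c := by
  obtain ⟨e, he⟩ := hdvd
  have hspos : (0:ℤ) < 3*s := by linarith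
  have hmod := Int.emod_nonneg (c + 3*s - 1) (by linarith : (3*s:ℤ) ≠ 0)
  have hmod2 := Int.emod_lt_of_pos (c + 3*s - 1) hspos
  have hdm := Int.mul_ediv_add_emod (c + 3*s - 1) (3*s)
  set j : ℤ := (c + 3*s - 1) / (3*s) with hj
  have hK1 : c ≤ 3*s*j := by omega
  have hK2 : 3*s*j ≤ c + 3*s - 1 := by omega
  have hj1 : 1 ≤ j := by nlinarith
  have h6j : 6*j ≤ 3*s*j := by nlinarith
  have h3j : 3*j ≤ c - 1 := by omega
  refine ⟨c, 3*s*j, c, 2*c - 3*j, by linarith, hK1, by linarith, le_refl c, by linarith,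
    by omega, by omega, ⟨s, by ring⟩, ⟨c - e - j, by linear_combination (-c) * he⟩⟩

lemma caseB {s b c : ℤ} (hs : 2 ≤ s) (hb : 0 ≤ b) (hbc : b < c) (hc3 : c ≤ 3*s)
    (hdvd : 3 ∣ c - b) : Wpred s b c := by
  obtain ⟨e, he⟩ := hdvd
  have hd3 : 3 ≤ c - b := by omega
  have hsd : 3*s ≤ s*(c-b) := by nlinarith
  refine ⟨s*(c-b), 2*(s*(c-b)), s*(c-b) + c, 2*(s*(c-b)) - b, by nlinarith,
    by linarith, le_refl _, by linarith, by linarith, by linarith, by linarith,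
    ⟨s+1, by ring⟩, ⟨c - e, by linear_combination (-(s*(c-b)))*he⟩⟩

lemma caseC {s b c : ℤ} (hs : 2 ≤ s) (hb : b < 0) (hbc : -b ≤ c) (hcge : 3 ≤ c)
    (hdvd : 3 ∣ c - b) : Wpred s b c := by
  obtain ⟨e, he⟩ := hdvd
  have hd6 : 6 ≤ c - b := by omega
  have hspos : (0:ℤ) < 3*s := by linarith
  have hmod := Int.emod_nonneg (-b + 3*s - 1) (by linarith : (3*s:ℤ) ≠ 0)
  have hmod2 := Int.emod_lt_of_pos (-b + 3*s - 1) hspos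
  have hdm := Int.mul_ediv_add_emod (-b + 3*s - 1) (3*s)
  set k : ℤ := (-b + 3*s - 1) / (3*s) with hk
  have hK1 : -b ≤ 3*s*k := by omega
  have hK2 : 3*s*k ≤ -b + 3*s - 1 := by omega
  have hsd : 3*s ≤ s*(c-b) := by nlinarith
  have hsd2 : 3*s - 1 + (c - b) ≤ s*(c-b) := by nlinarith [(s-1)*((c-b)-6)]
  refine ⟨s*(c-b), 2*(s*(c-b)), s*(c-b) + c + 3*s*k, 2*(s*(c-b)) - b - 3*s*k,
    by nlinarith, by linarith, le_refl _, by linarith, by linarith, by linarith,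
    by linarith, ⟨s+1, by ring⟩, ⟨c - e - k, by linear_combination (-(s*(c-b)))*he⟩⟩

lemma Wpred_neg_s {s b c : ℤ} (h : Wpred s b c) : Wpred (-s) b c := by
  obtain ⟨m, r1, r2, r3, hm, h1, h2, h3, h4, h5, h6, hd1, hd2⟩ := h
  refine ⟨m, 3*m - r1, r2, r3, hm, by omega, by omega, h3, h4, h5, h6, ?_, hd2⟩
  have : 3*m - r1 + -s*(r2+r3) = 3*m - (r1 + s*(r2+r3)) := by ring
  rw [this]
  exact dvd_sub (dvd_refl _) hd1

lemma Wpred_swap {s b c : ℤ} (h : Wpred s b c) : Wpred s c b := by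
  obtain ⟨m, r1, r2, r3, hm, h1, h2, h3, h4, h5, h6, hd1, hd2⟩ := h
  exact ⟨m, r1, r3, r2, hm, h1, h2, h5, h6, h3, h4, by rwa [add_comm r3 r2],
    by rwa [add_comm]⟩

lemma Wpred_negbc {s b c : ℤ} (h : Wpred s b c) : Wpred s (-b) (-c) := by
  obtain ⟨m, r1, r2, r3, hm, h1, h2, h3, h4, h5, h6, hd1, hd2⟩ := h
  refine ⟨m, r1, r2, r3, hm, h1, h2, h3, h4, h5, h6, hd1, ?_⟩
  have : -b*r2 + -c*r3 = -(b*r2 + c*r3) := by ring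
  rw [this]
  exact dvd_neg.mpr hd2

lemma Wcore {s b c : ℤ} (hs : 2 ≤ s) (hC : 3 ≤ c) (habs : |b| ≤ c) (hne : b ≠ c)
    (hdvd : 3 ∣ c - b) : Wpred s b c := by
  rcases le_or_gt (3*s) c with hc | hc
  · exact caseA hs hc hdvd
  · rcases le_or_gt 0 b with hb | hb
    · have hbc : b < c := lt_of_le_of_ne (le_trans (le_abs_self b) habs) hne
      exact caseB hs hb hbc (le_of_lt hc) hdvd
    · have hbc : -b ≤ c := le_trans (neg_le_abs b) habs
      exact caseC hs hb hbc hC hdvd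

lemma witness {s b c : ℤ} (hs : 2 ≤ |s|) (h3 : 3 ≤ |b| ∨ 3 ≤ |c|)
    (hne : b ≠ c) (hdvd : 3 ∣ c - b) : Wpred s b c := by
  -- first prove it for |s|, then fix the sign of s
  suffices h : Wpred |s| b c by
    rcases abs_cases s with ⟨hs1, _⟩ | ⟨hs1, _⟩
    · rwa [hs1] at h
    · rw [hs1] at h
      have := Wpred_neg_s h
      rwa [neg_neg] at this
  rcases le_total |b| |c| with hbc | hbc
  · have hC : 3 ≤ |c| := h3.elim (fun h => le_trans h hbc) id
    rcases le_total 0 c with hc | hc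
    · rw [abs_of_nonneg hc] at hC hbc
      exact Wcore hs hC hbc hne hdvd
    · rw [abs_of_nonpos hc] at hC hbc
      have h' : Wpred |s| (-b) (-c) := by
        refine Wcore hs hC (by rwa [abs_neg]) (by omega) ?_
        have : -c - -b = -(c - b) := by ring
        rw [this]; exact dvd_neg.mpr hdvd
      have := Wpred_negbc h'
      rwa [neg_neg, neg_neg] at this
  · have hB : 3 ≤ |b| := h3.elim id (fun h => le_trans h hbc)
    rcases le_total 0 b with hb | hb
    · rw [abs_of_nonneg hb] at hB hbc
      exact Wpred_swap (Wcore hs hB hbc (Ne.symm hne) (by omega))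
    · rw [abs_of_nonpos hb] at hB hbc
      have h' : Wpred |s| (-c) (-b) := by
        refine Wcore hs hB (by rwa [abs_neg]) (by omega) ?_
        omega
      have := Wpred_swap (Wpred_negbc h')
      rwa [neg_neg, neg_neg] at this

lemma keystep {m : ℕ} (hm : 0 < m) (u v : ZMod (3*m)) (w : ℤ)
    (hw1 : (m:ℤ) ≤ w) (hw2 : w ≤ 2*(m:ℤ))
    (h : u - v = (w : ZMod (3*m)) ∨ u - v = -(w : ZMod (3*m))) :
    u.val / m ≠ v.val / m := by
  haveI : NeZero (3*m) := ⟨by omega⟩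
  intro heq
  have hu := ZMod.val_lt u
  have hv := ZMod.val_lt v
  have hband : u.val < v.val + m ∧ v.val < u.val + m := by
    have h1 := Nat.div_add_mod u.val m
    have h2 := Nat.div_add_mod v.val m
    have h3 := Nat.mod_lt u.val hm
    have h4 := Nat.mod_lt v.val hm
    rw [heq] at h1
    omega
  have hu' : ((u.val : ℕ) : ZMod (3*m)) = u := by rw [ZMod.natCast_val, ZMod.cast_id]
  have hv' : ((v.val : ℕ) : ZMod (3*m)) = v := by rw [ZMod.natCast_val, ZMod.cast_id]
  rcases h with h | h
  · have hz : ((w - ((u.val : ℤ) - (v.val : ℤ)) : ℤ) : ZMod (3*m)) = 0 := by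
      push_cast
      rw [hu', hv', ← h]
      ring
    rw [ZMod.intCast_zmod_eq_zero_iff_dvd] at hz
    have hpos : 0 < w - ((u.val : ℤ) - (v.val : ℤ)) := by omega
    have := Int.le_of_dvd hpos hz
    omega
  · have hz : ((w + ((u.val : ℤ) - (v.val : ℤ)) : ℤ) : ZMod (3*m)) = 0 := by
      push_cast
      rw [hu', hv']
      rw [eq_neg_iff_add_eq_zero] at h
      linear_combination h
    rw [ZMod.intCast_zmod_eq_zero_iff_dvd] at hz
    have hpos : 0 < w + ((u.val : ℤ) - (v.val : ℤ)) := by omega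
    have := Int.le_of_dvd hpos hz
    omega

lemma chrom_le_three (M : Matrix (Fin 3) (Fin 2) ℤ) (m : ℕ) (hm : 0 < m)
    (a : Fin 3 → ℤ) (hlo : ∀ i, (m:ℤ) ≤ a i) (hhi : ∀ i, a i ≤ 2*(m:ℤ))
    (hdvd : ∀ j, (3*(m:ℤ)) ∣ ∑ i, a i * M i j) :
    (SACG M).chromaticNumber ≤ 3 := by
  haveI : NeZero (3*m) := ⟨by omega⟩
  let f : (Fin 3 → ℤ) →+ ZMod (3*m) :=
    AddMonoidHom.mk' (fun x => ((∑ i, a i * x i : ℤ) : ZMod (3*m))) (by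
      intro x y
      show ((∑ i, a i * (x + y) i : ℤ) : ZMod (3*m)) = _
      have : (∑ i, a i * (x + y) i) = (∑ i, a i * x i) + (∑ i, a i * y i) := by
        simp [Pi.add_apply, mul_add, Finset.sum_add_distrib]
      rw [this, Int.cast_add])
  have hker : colSubgroup M ≤ f.ker := by
    rw [colSubgroup, AddSubgroup.closure_le]
    rintro x ⟨j, rfl⟩
    have hz : ((∑ i, a i * M i j : ℤ) : ZMod (3*m)) = 0 := by
      rw [ZMod.intCast_zmod_eq_zero_iff_dvd]
      have : (((3*m : ℕ) : ℤ)) = 3*(m:ℤ) := by push_cast; ring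
      rw [this]
      exact hdvd j
    exact hz
  let g := QuotientAddGroup.lift (colSubgroup M) f hker
  have hsingle : ∀ i : Fin 3, f (Pi.single i 1) = ((a i : ℤ) : ZMod (3*m)) := by
    intro i
    show ((∑ k, a k * (Pi.single i 1 : Fin 3 → ℤ) k : ℤ) : ZMod (3*m)) = ((a i : ℤ) : ZMod (3*m))
    congr 1
    simp [Pi.single_apply]
  have valid : ∀ x y, (SACG M).Adj x y →
      ((g x).val / m : ℕ) ≠ (g y).val / m := by
    rintro x y ⟨hne, i, h | h⟩
    · refine keystep hm (g x) (g y) (a i) (hlo i) (hhi i) (Or.inl ?_)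
      rw [← map_sub g, h]
      show f (Pi.single i 1) = _
      rw [hsingle]
    · refine keystep hm (g x) (g y) (a i) (hlo i) (hhi i) (Or.inr ?_)
      rw [← map_sub g, h, map_neg]
      show -f (Pi.single i 1) = _
      rw [hsingle]
  let C : (SACG M).Coloring (Fin 3) :=
    SimpleGraph.Coloring.mk
      (fun x => ⟨(g x).val / m, by
        have := ZMod.val_lt (g x)
        rw [Nat.div_lt_iff_lt_mul hm]
        omega⟩)
      (by
        intro x y hadj
        simp only [Fin.mk.injEq, ne_eq]
        exact valid x y hadj)
  have := C.colorable.chromaticNumber_le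
  exact_mod_cast this


theorem almost_mHNF_lemma (y21 y22 y32 : ℤ)
    (M : Matrix (Fin 3) (Fin 2) ℤ)
    (hMdef : M = !![1, 0; y21, y22; y21, y32])
    (hrows : ∀ i, ∃ j, M i j ≠ 0)
    (hcols : ∀ j, ∃ i, M i j ≠ 0)
    (hmod : y22 ≡ y32 [ZMOD 3]) (hne : y22 ≠ y32)
    (hloops : NoLoops M)
    (hchi : (SACG M).chromaticNumber = 4) :
    |y22| = 1 ∨ |y22| = 2 ∨ |y32| = 1 ∨ |y32| = 2 ∨ |y21| = 1 := by
  by_contra hcon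
  push_neg at hcon
  obtain ⟨h1, h2, h3, h4, h5⟩ := hcon
  subst hMdef
  have hy21 : y21 ≠ 0 := by
    intro h0
    apply hloops 0
    apply AddSubgroup.subset_closure
    refine ⟨0, ?_⟩
    funext i
    fin_cases i <;>
      simp [h0, Pi.single_apply, Matrix.cons_val_zero, Matrix.cons_val_one,
        Matrix.head_cons, Matrix.cons_val_two, Matrix.vecHead, Matrix.vecTail]
  have hs2 : 2 ≤ |y21| := by
    rcases abs_cases y21 with ⟨hh, _⟩ | ⟨hh, _⟩ <;> omega
  have h33 : 3 ≤ |y22| ∨ 3 ≤ |y32| := by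
    rcases abs_cases y22 with ⟨ha, _⟩ | ⟨ha, _⟩ <;>
      rcases abs_cases y32 with ⟨hb, _⟩ | ⟨hb, _⟩ <;> omega
  have hdvd3 : (3:ℤ) ∣ y32 - y22 := hmod.dvd
  obtain ⟨m, r1, r2, r3, hm, hr1a, hr1b, hr2a, hr2b, hr3a, hr3b, hd1, hd2⟩ :=
    witness hs2 h33 hne hdvd3
  have hcast : ((m.toNat : ℕ) : ℤ) = m := Int.toNat_of_nonneg (by linarith)
  have hle := chrom_le_three !![1, 0; y21, y22; y21, y32] m.toNat (by omega)
    ![r1, r2, r3]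
    (by intro i; fin_cases i <;> simp <;> omega)
    (by intro i; fin_cases i <;> simp <;> omega)
    (by
      intro j
      obtain ⟨t1, ht1⟩ := hd1
      obtain ⟨t2, ht2⟩ := hd2
      fin_cases j
      · refine ⟨t1, ?_⟩
        simp [Fin.sum_univ_three, Matrix.cons_val_zero, Matrix.cons_val_one,
          Matrix.head_cons, Matrix.cons_val_two, Matrix.vecHead, Matrix.vecTail, hcast]
        linear_combination ht1
      · refine ⟨t2, ?_⟩
        simp [Fin.sum_univ_three, Matrix.cons_val_zero, Matrix.cons_val_one,
          Matrix.head_cons, Matrix.cons_val_two, Matrix.vecHead, Matrix.vecTail, hcast]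
        linear_combination ht2)
  rw [hchi] at hle
  norm_num at hle
end

section
/- There exist seven unit vectors v₁,…,v₇ in ℝ² such that the simple graph on ℝ² in which distinct points x and y are adjacent iff x − y = v_i or x − y = −v_i for some i ∈ {1,…,7} has chromatic number at least 4. -/
/-- The graph on the plane generated by the vectors `v i`: distinct points
`x` and `y` are adjacent iff `x - y = ± v i` for some `i`. -/
def planeGraph {n : ℕ} (v : Fin n → EuclideanSpace ℝ (Fin 2)) :
    SimpleGraph (EuclideanSpace ℝ (Fin 2)) where
  Adj x y := x ≠ y ∧ ∃ i, x - y = v i ∨ x - y = -(v i)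
  symm := ⟨by
    rintro x y ⟨hne, i, h | h⟩
    · exact ⟨hne.symm, i, Or.inr (by rw [← neg_sub, h])⟩
    · exact ⟨hne.symm, i, Or.inl (by rw [← neg_sub, h, neg_neg])⟩⟩
  loopless := ⟨fun x h => h.1 rfl⟩

/-- A point of the plane with the two given coordinates. -/
noncomputable def pt (a b : ℝ) : EuclideanSpace ℝ (Fin 2) := (WithLp.equiv 2 _).symm ![a, b]

lemma pt_norm_eq_one {a b : ℝ} (h : a ^ 2 + b ^ 2 = 1) : ‖pt a b‖ = 1 := by
  rw [EuclideanSpace.norm_eq, Fin.sum_univ_two, Real.sqrt_eq_one]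
  simp only [pt, WithLp.equiv_symm_apply, PiLp.toLp_apply, Matrix.cons_val_zero, Matrix.cons_val_one,
    Matrix.head_cons, Real.norm_eq_abs, sq_abs]
  exact h

lemma adj_of_sub_eq {n : ℕ} {v : Fin n → EuclideanSpace ℝ (Fin 2)}
    (hv : ∀ i, ‖v i‖ = 1) {x y : EuclideanSpace ℝ (Fin 2)} (i : Fin n)
    (h : x - y = v i ∨ x - y = -(v i)) : (planeGraph v).Adj x y := by
  show x ≠ y ∧ ∃ i, x - y = v i ∨ x - y = -(v i)
  refine ⟨fun he => ?_, i, h⟩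
  have h0 : ‖x - y‖ = 1 := by
    rcases h with h | h
    · rw [h]; exact hv i
    · rw [h, norm_neg]; exact hv i
  rw [he, sub_self, norm_zero] at h0
  norm_num at h0

set_option synthInstance.maxHeartbeats 1000000 in
set_option synthInstance.maxSize 3000 in
set_option maxHeartbeats 4000000 in
/-- No proper 3-coloring of the Moser spindle pattern. -/
lemma moser_key : ∀ a b c d e f g : Fin 3,
    ¬ (a ≠ b ∧ a ≠ c ∧ b ≠ c ∧ b ≠ d ∧ c ≠ d ∧ a ≠ e ∧ a ≠ f ∧ e ≠ f ∧ e ≠ g ∧ f ≠ g ∧ d ≠ g) := by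
  decide

theorem exists_seven_unit_vectors_chromatic_number_ge_four :
    ∃ v : Fin 7 → EuclideanSpace ℝ (Fin 2),
      (∀ i, ‖v i‖ = 1) ∧ 4 ≤ (planeGraph v).chromaticNumber := by
  have h3 : Real.sqrt 3 ^ 2 = 3 := Real.sq_sqrt (by norm_num)
  have h11 : Real.sqrt 11 ^ 2 = 11 := Real.sq_sqrt (by norm_num)
  set s3 := Real.sqrt 3 with hs3
  set s11 := Real.sqrt 11 with hs11
  have h33 : s3 ^ 2 * s11 ^ 2 = 33 := by rw [h3, h11]; norm_num
  -- the seven generating vectors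
  set v : Fin 7 → EuclideanSpace ℝ (Fin 2) :=
    ![pt (s3/2) (-(1/2)), pt (s3/2) (1/2), pt 0 1,
      pt ((5*s3 + s11)/12) ((s3*s11 - 5)/12), pt ((5*s3 - s11)/12) ((s3*s11 + 5)/12),
      pt (-(s11/6)) (5/6), pt (s3/6) (-(s3*s11/6))] with hv
  have hunit : ∀ i, ‖v i‖ = 1 := by
    intro i
    fin_cases i <;>
      exact pt_norm_eq_one (by nlinarith [h3, h11, h33])
  refine ⟨v, hunit, ?_⟩
  -- the seven points of the Moser spindle
  set p0 : EuclideanSpace ℝ (Fin 2) := pt 0 0 with hp0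
  set p1 : EuclideanSpace ℝ (Fin 2) := pt (s3/2) (-(1/2)) with hp1
  set p2 : EuclideanSpace ℝ (Fin 2) := pt (s3/2) (1/2) with hp2
  set p3 : EuclideanSpace ℝ (Fin 2) := pt s3 0 with hp3
  set p4 : EuclideanSpace ℝ (Fin 2) := pt ((5*s3 + s11)/12) ((s3*s11 - 5)/12) with hp4
  set p5 : EuclideanSpace ℝ (Fin 2) := pt ((5*s3 - s11)/12) ((s3*s11 + 5)/12) with hp5
  set p6 : EuclideanSpace ℝ (Fin 2) := pt (5*s3/6) (s3*s11/6) with hp6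
  have ptsub : ∀ a b c d : ℝ, pt a b - pt c d = pt (a - c) (b - d) := by
    intro a b c d
    ext j
    fin_cases j <;> simp [pt, PiLp.sub_apply]
  have ptneg : ∀ a b : ℝ, -pt a b = pt (-a) (-b) := by
    intro a b
    ext j
    fin_cases j <;> simp [pt, PiLp.neg_apply]
  have pteq : ∀ a b c d : ℝ, a = c → b = d → pt a b = pt c d := by
    rintro a b c d rfl rfl; rfl
  -- the eleven edges
  have e01 : (planeGraph v).Adj p0 p1 := by
    refine adj_of_sub_eq hunit 0 (Or.inr ?_)
    show _ = -(pt _ _)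
    rw [hp0, hp1, ptsub, ptneg]; exact pteq _ _ _ _ (by ring) (by ring)
  have e02 : (planeGraph v).Adj p0 p2 := by
    refine adj_of_sub_eq hunit 1 (Or.inr ?_)
    show _ = -(pt _ _)
    rw [hp0, hp2, ptsub, ptneg]; exact pteq _ _ _ _ (by ring) (by ring)
  have e12 : (planeGraph v).Adj p1 p2 := by
    refine adj_of_sub_eq hunit 2 (Or.inr ?_)
    show _ = -(pt _ _)
    rw [hp1, hp2, ptsub, ptneg]; exact pteq _ _ _ _ (by ring) (by ring)
  have e13 : (planeGraph v).Adj p1 p3 := by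
    refine adj_of_sub_eq hunit 1 (Or.inr ?_)
    show _ = -(pt _ _)
    rw [hp1, hp3, ptsub, ptneg]; exact pteq _ _ _ _ (by ring) (by ring)
  have e23 : (planeGraph v).Adj p2 p3 := by
    refine adj_of_sub_eq hunit 0 (Or.inr ?_)
    show _ = -(pt _ _)
    rw [hp2, hp3, ptsub, ptneg]; exact pteq _ _ _ _ (by ring) (by ring)
  have e04 : (planeGraph v).Adj p0 p4 := by
    refine adj_of_sub_eq hunit 3 (Or.inr ?_)
    show _ = -(pt _ _)
    rw [hp0, hp4, ptsub, ptneg]; exact pteq _ _ _ _ (by ring) (by ring)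
  have e05 : (planeGraph v).Adj p0 p5 := by
    refine adj_of_sub_eq hunit 4 (Or.inr ?_)
    show _ = -(pt _ _)
    rw [hp0, hp5, ptsub, ptneg]; exact pteq _ _ _ _ (by ring) (by ring)
  have e45 : (planeGraph v).Adj p4 p5 := by
    refine adj_of_sub_eq hunit 5 (Or.inr ?_)
    show _ = -(pt _ _)
    rw [hp4, hp5, ptsub, ptneg]; exact pteq _ _ _ _ (by ring) (by ring)
  have e46 : (planeGraph v).Adj p4 p6 := by
    refine adj_of_sub_eq hunit 4 (Or.inr ?_)
    show _ = -(pt _ _)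
    rw [hp4, hp6, ptsub, ptneg]; exact pteq _ _ _ _ (by ring) (by ring)
  have e56 : (planeGraph v).Adj p5 p6 := by
    refine adj_of_sub_eq hunit 3 (Or.inr ?_)
    show _ = -(pt _ _)
    rw [hp5, hp6, ptsub, ptneg]; exact pteq _ _ _ _ (by ring) (by ring)
  have e36 : (planeGraph v).Adj p3 p6 := by
    refine adj_of_sub_eq hunit 6 (Or.inl ?_)
    show _ = pt _ _
    rw [hp3, hp6, ptsub]; exact pteq _ _ _ _ (by ring) (by ring)
  -- conclude
  refine le_trans (by norm_num : (4:ℕ∞) ≤ 3 + 1) (Order.add_one_le_of_lt ?_)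
  refine lt_of_not_ge fun hle => ?_
  have hc : (planeGraph v).Colorable 3 := by
    have h' : (planeGraph v).chromaticNumber ≤ ((3 : ℕ) : ℕ∞) := by exact_mod_cast hle
    exact SimpleGraph.chromaticNumber_le_iff_colorable.mp h'
  obtain ⟨C⟩ := hc
  exact moser_key (C p0) (C p1) (C p2) (C p3) (C p4) (C p5) (C p6)
    ⟨C.valid e01, C.valid e02, C.valid e12, C.valid e13, C.valid e23, C.valid e04,
     C.valid e05, C.valid e45, C.valid e46, C.valid e56, C.valid e36⟩
end
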